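/- In the amalgamation setting: let m < n, y ∈ Aₘ ∖ D, and x ∈ Aₙ ∖ D. If x <_t y then x ≤ₙ aⁿₙ and bᵐₘ ≤ₘ y. Moreover, if x and y are compatible in <_t then bᵐₘ ≤ₘ y. -/
import Mathlib


open Cardinal Set

noncomputable section

/-- A partial function from ordinals to ordinals, represented by its graph. -/
abbrev ColFun := Set (Ordinal × Ordinal)

/-- `q ∈ Col(X)`: `q` is (the graph of) a function whose domain is an ordinal `< ω₁`
and whose range is a subset of `X`. -/
def IsColFun (X : Set Ordinal) (q : ColFun) : Prop :=
  (∀ a b b', (a, b) ∈ q → (a, b') ∈ q → b = b') ∧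
  (∃ δ : Ordinal, δ < (aleph 1).ord ∧ ∀ a : Ordinal, (∃ b, (a, b) ∈ q) ↔ a < δ) ∧
  (∀ a b, (a, b) ∈ q → b ∈ X)

/-- A quadruple `((A, <), B, C, F)`; `F` is a partial function represented by its graph. -/
structure Quad where
  A : Set Ordinal
  lt : Ordinal → Ordinal → Prop
  B : Set (Ordinal × ColFun)
  C : Set (ℕ → Ordinal)
  F : Set ((ℕ → Ordinal) × (Ordinal × ColFun) × ℕ)

namespace Quad

/-- `x ≤ᵣ y`. -/
def leR (r : Quad) (x y : Ordinal) : Prop := r.lt x y ∨ x = y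

/-- `x ⊥ᵣ y`: no `z ∈ Aᵣ` with `z ≤ᵣ x` and `z ≤ᵣ y`. -/
def Incomp (r : Quad) (x y : Ordinal) : Prop := ¬ ∃ z ∈ r.A, r.leR z x ∧ r.leR z y

/-- `r` is a forcing condition. -/
def IsCond (r : Quad) : Prop :=
  -- (1) A is a countable set of ordinals < ω₂
  r.A.Countable ∧
  (∀ a ∈ r.A, a < (aleph 2).ord) ∧
  -- (2) <ᵣ is a strict partial order on A
  (∀ a b, r.lt a b → a ∈ r.A ∧ b ∈ r.A) ∧
  (∀ a b c, r.lt a b → r.lt b c → r.lt a c) ∧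
  -- (3) b <ᵣ a implies a < b (whence <ᵣ is irreflexive and asymmetric)
  (∀ a b, r.lt b a → a < b) ∧
  -- (4) B is a countable subset of A × Col(A) with p ∈ range q for (p,q) ∈ B
  r.B.Countable ∧
  (∀ pq ∈ r.B, pq.1 ∈ r.A ∧ IsColFun r.A pq.2 ∧ ∃ α, (α, pq.1) ∈ pq.2) ∧
  -- (5) C is a countable set of <ᵣ-descending sequences in A without lower bound
  r.C.Countable ∧
  (∀ a ∈ r.C, (∀ n, a n ∈ r.A) ∧ (∀ n, r.lt (a (n + 1)) (a n)) ∧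
    ¬ ∃ z ∈ r.A, ∀ n, r.leR z (a n)) ∧
  -- (6) F is a (partial) function whose domain consists exactly of the pairs
  -- (⟨aₙ⟩, (p,q)) with ⟨aₙ⟩ ∈ C, (p,q) ∈ B, p ≥ a₀, satisfying (*)
  (∀ x ∈ r.F, x.1 ∈ r.C ∧ x.2.1 ∈ r.B ∧ x.1 0 ≤ x.2.1.1) ∧
  (∀ a pq, a ∈ r.C → pq ∈ r.B → a 0 ≤ pq.1 → ∃! m : ℕ, (a, pq, m) ∈ r.F) ∧
  (∀ a pq m, (a, pq, m) ∈ r.F →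
    ∀ p'q' ∈ r.B, r.leR p'q'.1 pq.1 → pq.2 ⊆ p'q'.2 →
      r.lt p'q'.1 (a m) → ∃ k, r.Incomp p'q'.1 (a k))

/-- `Ext r s`: `r ≤_R s`, i.e. `r` is stronger than `s`. -/
def Ext (r s : Quad) : Prop :=
  s.A ⊆ r.A ∧
  (∀ a ∈ s.A, ∀ b ∈ s.A, (r.lt a b ↔ s.lt a b)) ∧
  (∀ a ∈ s.A, ∀ b ∈ s.A, (r.Incomp a b ↔ s.Incomp a b)) ∧
  s.B ⊆ r.B ∧ s.C ⊆ r.C ∧ s.F ⊆ r.F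

end Quad

open Quad

/-- Push a `Col`-function forward along a map of ordinals (acting on the range). -/
def mapCol (f : Ordinal → Ordinal) (q : ColFun) : ColFun :=
  {x | ∃ a b, (a, b) ∈ q ∧ x = (a, f b)}

/-- The amalgamation setting: a sequence of conditions forming a Δ-system with root `D`,
a commutative system of isomorphisms `π`, and descending chains `cⁿ` matched by `π`. -/
structure Amalg where
  r : ℕ → Quad
  cond : ∀ n, (r n).IsCond
  D : Set Ordinal
  inter : ∀ m n : ℕ, m < n → (r m).A ∩ (r n).A = D
  supD_lt : ∀ m : ℕ, ∀ x ∈ (r m).A \ D, sSup D < x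
  supA_lt : ∀ m n : ℕ, m < n → ∀ x ∈ (r n).A \ D, sSup (r m).A < x
  lt_agree : ∀ m n : ℕ, ∀ a ∈ D, ∀ b ∈ D, ((r m).lt a b ↔ (r n).lt a b)
  incomp_agree : ∀ m n : ℕ, ∀ a ∈ D, ∀ b ∈ D, ((r m).Incomp a b ↔ (r n).Incomp a b)
  B_agree : ∀ m n : ℕ, ∀ pq : Ordinal × ColFun, pq.1 ∈ D → IsColFun D pq.2 →
    (pq ∈ (r m).B ↔ pq ∈ (r n).B)
  C_agree : ∀ m n : ℕ, ∀ a : ℕ → Ordinal, (∀ k, a k ∈ D) → (a ∈ (r m).C ↔ a ∈ (r n).C)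
  pi : ℕ → ℕ → Ordinal → Ordinal
  pi_mem : ∀ m n : ℕ, ∀ x ∈ (r m).A, pi m n x ∈ (r n).A
  pi_id : ∀ m : ℕ, ∀ x ∈ (r m).A, pi m m x = x
  pi_inv : ∀ m n : ℕ, ∀ x ∈ (r m).A, pi n m (pi m n x) = x
  pi_comm : ∀ m n k : ℕ, ∀ x ∈ (r m).A, pi n k (pi m n x) = pi m k x
  pi_idD : ∀ m n : ℕ, ∀ x ∈ D, pi m n x = x
  pi_iso : ∀ m n : ℕ, ∀ x ∈ (r m).A, ∀ y ∈ (r m).A,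
    ((r m).lt x y ↔ (r n).lt (pi m n x) (pi m n y))
  pi_B : ∀ m n : ℕ, ∀ pq ∈ (r m).B, (pi m n pq.1, mapCol (pi m n) pq.2) ∈ (r n).B
  pi_C : ∀ m n : ℕ, ∀ a ∈ (r m).C, (fun k => pi m n (a k)) ∈ (r n).C
  pi_F : ∀ m n : ℕ, ∀ x ∈ (r m).F,
    ((fun k => pi m n (x.1 k)), (pi m n x.2.1.1, mapCol (pi m n) x.2.1.2), x.2.2) ∈ (r n).F
  c : ℕ → ℕ → Ordinal
  c_mem : ∀ n k : ℕ, c n k ∈ (r n).A \ D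
  c_dec : ∀ n k : ℕ, (r n).lt (c n (k + 1)) (c n k)
  pi_c : ∀ m n k : ℕ, pi m n (c m k) = c n k

namespace Amalg

/-- `A_t = ⋃ₙ Aₙ`. -/
def At (S : Amalg) : Set Ordinal := ⋃ n, (S.r n).A

/-- `<_t`: the transitive closure of the union of the `<ₙ` together with the pairs
`aⁿ⁺¹ₙ₊₁ <_t bⁿₙ` (recall `aⁿₖ = cⁿ₂ₖ` and `bⁿₖ = cⁿ₂ₖ₊₁`). -/
def ltT (S : Amalg) : Ordinal → Ordinal → Prop :=
  Relation.TransGen (fun x y =>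
    (∃ n, (S.r n).lt x y) ∨ ∃ n : ℕ, x = S.c (n + 1) (2 * (n + 1)) ∧ y = S.c n (2 * n + 1))

/-- `x ≤_t y`. -/
def leT (S : Amalg) (x y : Ordinal) : Prop := S.ltT x y ∨ x = y

/-- `x` and `y` are compatible in `<_t`. -/
def CompatT (S : Amalg) (x y : Ordinal) : Prop := ∃ z ∈ S.At, S.leT z x ∧ S.leT z y

end Amalg

namespace Amalg

lemma bddD (S : Amalg) : BddAbove S.D := by
  refine ⟨(aleph 2).ord, fun d hd => ?_⟩
  have h := S.inter 0 1 (by norm_num)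
  have hd0 : d ∈ (S.r 0).A := by
    rw [← h] at hd; exact hd.1
  exact ((S.cond 0).2.1 d hd0).le

lemma memD_of_pair (S : Amalg) {i j : ℕ} (hij : i ≠ j) {w : Ordinal}
    (hi : w ∈ (S.r i).A) (hj : w ∈ (S.r j).A) : w ∈ S.D := by
  rcases lt_or_gt_of_ne hij with h | h
  · rw [← S.inter i j h]; exact ⟨hi, hj⟩
  · rw [← S.inter j i h]; exact ⟨hj, hi⟩

lemma baseR_D (S : Amalg) {z w : Ordinal} (hz : z ∈ S.D)
    (h : (∃ n, (S.r n).lt z w) ∨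
      ∃ n : ℕ, z = S.c (n + 1) (2 * (n + 1)) ∧ w = S.c n (2 * n + 1)) : w ∈ S.D := by
  rcases h with ⟨j, hlt⟩ | ⟨j, hz', _⟩
  · obtain ⟨_, _, hmem, _, hdec, _⟩ := S.cond j
    have hwA : w ∈ (S.r j).A := (hmem z w hlt).2
    by_contra hwD
    have h1 : w < z := hdec w z hlt
    have h2 : z ≤ sSup S.D := le_csSup S.bddD hz
    have h3 : sSup S.D < w := S.supD_lt j w ⟨hwA, hwD⟩
    exact absurd (h1.trans_le h2) (not_lt.mpr h3.le)
  · exact absurd hz (by rw [hz']; exact (S.c_mem (j + 1) (2 * (j + 1))).2)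

lemma stayD (S : Amalg) {z w : Ordinal} (hz : z ∈ S.D) (h : S.ltT z w) : w ∈ S.D := by
  induction h with
  | single h => exact S.baseR_D hz h
  | tail _ h ih => exact S.baseR_D ih h

lemma main (S : Amalg) {k : ℕ} {z w : Ordinal} (hz : z ∈ (S.r k).A \ S.D)
    (h : S.ltT z w) : w ∉ S.D →
    ∃ j, w ∈ (S.r j).A \ S.D ∧
      ((j = k ∧ (S.r k).lt z w) ∨
       (j < k ∧ (S.r k).leR z (S.c k (2 * k)) ∧ (S.r j).leR (S.c j (2 * j + 1)) w)) := by
  induction h with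
  | single hstep =>
      intro hw
      rcases hstep with ⟨i, hlt⟩ | ⟨i, hz', hw'⟩
      · obtain ⟨_, _, hmem, _, _, _⟩ := S.cond i
        have hzi : z ∈ (S.r i).A := (hmem z _ hlt).1
        have hwi := (hmem z _ hlt).2
        have hik : i = k := by
          by_contra hne
          exact hz.2 (S.memD_of_pair hne hzi hz.1)
        subst hik
        exact ⟨i, ⟨hwi, hw⟩, Or.inl ⟨rfl, hlt⟩⟩
      · have hki : k = i + 1 := by
          by_contra hne
          refine hz.2 (S.memD_of_pair (Ne.symm hne) ?_ hz.1)
          rw [hz']; exact (S.c_mem (i + 1) (2 * (i + 1))).1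
        refine ⟨i, ?_, Or.inr ⟨by omega, ?_, Or.inr hw'.symm⟩⟩
        · rw [hw']; exact S.c_mem i (2 * i + 1)
        · right; rw [hz', hki]
  | tail h1 hstep ih =>
      intro hw
      have hwD' : _ ∉ S.D := fun hD => hw (S.baseR_D hD hstep)
      obtain ⟨j', hwj', hcase⟩ := ih hwD'
      rcases hstep with ⟨i, hlt⟩ | ⟨i, hw1', hw'⟩
      · obtain ⟨_, _, hmem, htrans, _, _⟩ := S.cond i
        have hij : i = j' := by
          by_contra hne
          exact hwj'.2 (S.memD_of_pair hne (hmem _ _ hlt).1 hwj'.1)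
        subst hij
        refine ⟨i, ⟨(hmem _ _ hlt).2, hw⟩, ?_⟩
        rcases hcase with ⟨hik, hzw'⟩ | ⟨hik, hle1, hle2⟩
        · subst hik
          exact Or.inl ⟨rfl, htrans _ _ _ hzw' hlt⟩
        · refine Or.inr ⟨hik, hle1, ?_⟩
          rcases hle2 with h2 | h2
          · exact Or.inl (htrans _ _ _ h2 hlt)
          · exact Or.inl (h2 ▸ hlt)
      · have hij : j' = i + 1 := by
          by_contra hne
          refine hwj'.2 (S.memD_of_pair hne hwj'.1 ?_)
          rw [hw1']; exact (S.c_mem (i + 1) (2 * (i + 1))).1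
        refine ⟨i, ?_, ?_⟩
        · rw [hw']; exact S.c_mem i (2 * i + 1)
        · rcases hcase with ⟨hik, hzw'⟩ | ⟨hik, hle1, _⟩
          · have hk : k = i + 1 := by omega
            refine Or.inr ⟨by omega, Or.inl ?_, Or.inr hw'.symm⟩
            rw [hk, ← hw1', ← hk]
            exact hzw'
          · exact Or.inr ⟨by omega, hle1, Or.inr hw'.symm⟩

end Amalg

/-- Lemma 7(i): for `m < n`, `y ∈ Aₘ ∖ D`, `x ∈ Aₙ ∖ D`: if `x <_t y` then
`x ≤ₙ aⁿₙ` and `bᵐₘ ≤ₘ y`; if `x` and `y` are compatible in `<_t` then `bᵐₘ ≤ₘ y`. -/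
theorem stmt6 (S : Amalg) (m n : ℕ) (hmn : m < n)
    (y : Ordinal) (hy : y ∈ (S.r m).A \ S.D)
    (x : Ordinal) (hx : x ∈ (S.r n).A \ S.D) :
    (S.ltT x y → (S.r n).leR x (S.c n (2 * n)) ∧ (S.r m).leR (S.c m (2 * m + 1)) y) ∧
    (S.CompatT x y → (S.r m).leR (S.c m (2 * m + 1)) y) := by
  have key : ∀ k, m < k → ∀ z, z ∈ (S.r k).A \ S.D → S.ltT z y →
      (S.r m).leR (S.c m (2 * m + 1)) y := by
    intro k hk z hzk hzy
    obtain ⟨j, hyj, hcase⟩ := S.main hzk hzy hy.2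
    have hjm : j = m := by
      by_contra hne
      exact hy.2 (S.memD_of_pair hne hyj.1 hy.1)
    subst hjm
    rcases hcase with ⟨hjk, _⟩ | ⟨_, _, hle⟩
    · omega
    · exact hle
  constructor
  · intro hxy
    obtain ⟨j, hyj, hcase⟩ := S.main hx hxy hy.2
    have hjm : j = m := by
      by_contra hne
      exact hy.2 (S.memD_of_pair hne hyj.1 hy.1)
    subst hjm
    rcases hcase with ⟨hjk, _⟩ | ⟨_, hle1, hle2⟩
    · omega
    · exact ⟨hle1, hle2⟩
  · intro hc
    obtain ⟨z, hzAt, hzx, hzy⟩ := hc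
    obtain ⟨p, hp⟩ := Set.mem_iUnion.mp hzAt
    have hzD : z ∉ S.D := by
      intro hD
      rcases hzy with h | h
      · exact hy.2 (S.stayD hD h)
      · rw [h] at hD; exact hy.2 hD
    obtain ⟨k, hzk, hmk⟩ : ∃ k, z ∈ (S.r k).A \ S.D ∧ m < k := by
      rcases hzx with hlt | heq
      · obtain ⟨j, hxj, hcase⟩ := S.main ⟨hp, hzD⟩ hlt hx.2
        have hjn : j = n := by
          by_contra hne
          exact hx.2 (S.memD_of_pair hne hxj.1 hx.1)
        refine ⟨p, ⟨hp, hzD⟩, ?_⟩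
        rcases hcase with ⟨h1, _⟩ | ⟨h1, _⟩ <;> omega
      · exact ⟨n, by rw [heq]; exact hx, hmn⟩
    have hzy' : S.ltT z y := by
      rcases hzy with h | h
      · exact h
      · exact absurd (S.memD_of_pair (by omega : k ≠ m) hzk.1 (by rw [h]; exact hy.1)) hzD
    exact key k hmk z hzk hzy'
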